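/- Let (X₀, r₀) and (Y, r_Y) be disjoint finite square-free multipermutation solutions with mpl(X₀) = m ≥ 1 and mpl(Y) = n ≥ 1. Then the wreath product solution (Z,r) = (X₀, r₀) ≀ (Y, r_Y) is a multipermutation solution with mpl(Z,r) = m + n − 1. -/
import Mathlib


namespace YBPaper

variable {X : Type*}

/-- Left translation: `lact r x y = ˣy`. -/
def lact (r : X × X → X × X) (x y : X) : X := (r (x, y)).1

/-- Right translation: `ract r x y = xʸ`. -/
def ract (r : X × X → X × X) (x y : X) : X := (r (x, y)).2

def r12 (r : X × X → X × X) : X × X × X → X × X × X :=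
  fun p => ((r (p.1, p.2.1)).1, (r (p.1, p.2.1)).2, p.2.2)

def r23 (r : X × X → X × X) : X × X × X → X × X × X :=
  fun p => (p.1, r (p.2.1, p.2.2))

/-- A non-degenerate involutive square-free set-theoretic solution of the YBE. -/
structure IsSquareFreeSolution (r : X × X → X × X) : Prop where
  nondegL : ∀ x : X, Function.Bijective fun y => (r (x, y)).1
  nondegR : ∀ y : X, Function.Bijective fun x => (r (x, y)).2
  invol : ∀ p : X × X, r (r p) = p
  sqfree : ∀ x : X, r (x, x) = (x, x)
  braided : ∀ p : X × X × X, r12 r (r23 r (r12 r p)) = r23 r (r12 r (r23 r p))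

/-- `relk l k x y` means the images of `x` and `y` in the `k`-th retract coincide. -/
def relk (l : X → X → X) : ℕ → X → X → Prop
  | 0 => fun x y => x = y
  | (k+1) => fun x y => ∀ z : X, relk l k (l x z) (l y z)

/-- `mplLe l m` : the `m`-th retract is a one-element solution, i.e. `mpl ≤ m`. -/
def mplLe (l : X → X → X) (m : ℕ) : Prop := ∀ x y : X, relk l m x y

/-- `mplEq l m` : the multipermutation level is exactly `m`. -/
def mplEq (l : X → X → X) (m : ℕ) : Prop := mplLe l m ∧ ∀ k < m, ¬ mplLe l k

/-- The set of left translations, as permutations. -/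
def lperms (r : X × X → X × X) : Set (Equiv.Perm X) :=
  {σ : Equiv.Perm X | ∃ x : X, ∀ y : X, σ y = (r (x, y)).1}

/-- The YB permutation group `𝒢(X,r)`, generated by the left translations. -/
def Gcal (r : X × X → X × X) : Subgroup (Equiv.Perm X) := Subgroup.closure (lperms r)


/-- The wreath product map on `Z = (Y × X₀) ⊕ Y`, where `(α, x)` represents the copy
`t_{α,x}` of `x ∈ X₀` indexed by `α ∈ Y`:
* within one copy it is the copy of `r₀`; distinct copies act trivially on each other;
* `β ∈ Y` maps `t_{α,x}` to `t_{ᵝα,x}` and is unchanged; elements of copies act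
  trivially on `Y` (with the inverse permutation appearing on the right output);
* on `Y` it is `r_Y`. -/
noncomputable def wreathR {X0 Y : Type*} [Nonempty Y] [DecidableEq Y]
    (r0 : X0 × X0 → X0 × X0) (rY : Y × Y → Y × Y) :
    ((Y × X0) ⊕ Y) × ((Y × X0) ⊕ Y) → ((Y × X0) ⊕ Y) × ((Y × X0) ⊕ Y) :=
  fun p =>
    match p with
    | (Sum.inl (α, x), Sum.inl (α', x')) =>
        if α = α' then
          (Sum.inl (α, (r0 (x, x')).1), Sum.inl (α, (r0 (x, x')).2))
        else (Sum.inl (α', x'), Sum.inl (α, x))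
    | (Sum.inr β, Sum.inl (α, x)) => (Sum.inl ((rY (β, α)).1, x), Sum.inr β)
    | (Sum.inl (α, x), Sum.inr β) =>
        (Sum.inr β, Sum.inl (Function.invFun (fun a => (rY (β, a)).1) α, x))
    | (Sum.inr β, Sum.inr γ) => (Sum.inr (rY (β, γ)).1, Sum.inr (rY (β, γ)).2)


theorem relk_zero (l : X → X → X) (x y : X) : relk l 0 x y ↔ x = y := Iff.rfl

theorem relk_succ (l : X → X → X) (k : ℕ) (x y : X) :
    relk l (k+1) x y ↔ ∀ z : X, relk l k (l x z) (l y z) := Iff.rfl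

theorem relk_refl (l : X → X → X) : ∀ (k : ℕ) (x : X), relk l k x x
  | 0, _ => rfl
  | (k+1), _ => fun _ => relk_refl l k _

theorem relk_symm (l : X → X → X) : ∀ (k : ℕ) (x y : X), relk l k x y → relk l k y x
  | 0, _, _, h => h.symm
  | (k+1), _, _, h => fun z => relk_symm l k _ _ (h z)

theorem relk_trans (l : X → X → X) :
    ∀ (k : ℕ) (x y w : X), relk l k x y → relk l k y w → relk l k x w
  | 0, _, _, _, h, h' => h.trans h'
  | (k+1), _, _, _, h, h' => fun z => relk_trans l k _ _ _ (h z) (h' z)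

theorem relk_mono (l : X → X → X) : ∀ (k : ℕ) (x y : X), relk l k x y → relk l (k+1) x y
  | 0, x, y, h => fun _ => by rw [relk_zero] at h; rw [h]; exact relk_refl l 0 _
  | (k+1), _, _, h => fun z => relk_mono l k _ _ (h z)

theorem relk_of_le (l : X → X → X) {k k' : ℕ} (hk : k ≤ k') {x y : X} (h : relk l k x y) :
    relk l k' x y := by
  induction k' with
  | zero => simpa [Nat.le_zero.mp hk] using h
  | succ k'' ih =>
    rcases Nat.lt_or_ge k (k''+1) with h' | h'
    · exact relk_mono l _ _ _ (ih (by omega))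
    · have : k = k''+1 := by omega
      subst this; exact h

theorem mplLe_mono (l : X → X → X) {k k' : ℕ} (h : mplLe l k) (hk : k ≤ k') : mplLe l k' :=
  fun x y => relk_of_le l hk (h x y)

section Wreath
variable {X0 Y : Type*} [Nonempty Y] [DecidableEq Y]
variable (r0 : X0 × X0 → X0 × X0) (rY : Y × Y → Y × Y)

theorem wL_inl_inl (α α' : Y) (x x' : X0) :
    lact (wreathR r0 rY) (Sum.inl (α, x)) (Sum.inl (α', x')) =
      if α = α' then Sum.inl (α, lact r0 x x') else Sum.inl (α', x') := by
  by_cases h : α = α' <;> simp [lact, wreathR, h]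

theorem wL_inl_inr (α : Y) (x : X0) (β : Y) :
    lact (wreathR r0 rY) (Sum.inl (α, x)) (Sum.inr β) = Sum.inr β := rfl

theorem wL_inr_inl (β α : Y) (x : X0) :
    lact (wreathR r0 rY) (Sum.inr β) (Sum.inl (α, x)) = Sum.inl (lact rY β α, x) := rfl

theorem wL_inr_inr (β γ : Y) :
    lact (wreathR r0 rY) (Sum.inr β) (Sum.inr γ) = Sum.inr (lact rY β γ) := rfl

/-- Within one copy, the wreath relation agrees with the relation of `X0`. -/
theorem same_copy_iff : ∀ (k : ℕ) (α : Y) (x x' : X0),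
    relk (lact (wreathR r0 rY)) k (Sum.inl (α, x)) (Sum.inl (α, x')) ↔
      relk (lact r0) k x x' := by
  intro k
  induction k with
  | zero =>
    intro α x x'
    constructor
    · intro h
      have h' : (Sum.inl (α, x) : (Y × X0) ⊕ Y) = Sum.inl (α, x') := h
      rw [relk_zero]
      exact congrArg Prod.snd (Sum.inl.inj h')
    · intro h
      rw [relk_zero] at h
      rw [h]
      exact relk_refl _ 0 _
  | succ k ih =>
    intro α x x'
    constructor
    · intro h z0
      have h2 := (relk_succ _ _ _ _).mp h (Sum.inl (α, z0))
      rw [wL_inl_inl, wL_inl_inl, if_pos rfl, if_pos rfl] at h2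
      exact (ih α _ _).mp h2
    · intro h
      rw [relk_succ]
      intro z
      rcases z with ⟨α'', x''⟩ | β
      · by_cases hα : α = α''
        · rw [wL_inl_inl, wL_inl_inl, if_pos hα, if_pos hα]
          exact (ih α _ _).mpr ((relk_succ _ _ _ _).mp h x'')
        · rw [wL_inl_inl, wL_inl_inl, if_neg hα, if_neg hα]
          exact relk_refl _ _ _
      · rw [wL_inl_inr, wL_inl_inr]
        exact relk_refl _ _ _

/-- Sufficiency: two copy elements whose `X0`-parts are "k-trivial" get identified
at level `k+1`, whatever their indices. -/
theorem cross_sound (k : ℕ) (α α' : Y) (x x' : X0)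
    (hx : ∀ z, relk (lact r0) k (lact r0 x z) z)
    (hx' : ∀ z, relk (lact r0) k (lact r0 x' z) z) :
    relk (lact (wreathR r0 rY)) (k+1) (Sum.inl (α, x)) (Sum.inl (α', x')) := by
  rw [relk_succ]
  intro z
  rcases z with ⟨α'', x''⟩ | β
  · rw [wL_inl_inl, wL_inl_inl]
    by_cases h1 : α = α'' <;> by_cases h2 : α' = α''
    · rw [if_pos h1, if_pos h2, h1, h2]
      exact (same_copy_iff r0 rY _ _ _ _).mpr
        (relk_trans _ _ _ _ _ (hx x'') (relk_symm _ _ _ _ (hx' x'')))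
    · rw [if_pos h1, if_neg h2, h1]
      exact (same_copy_iff r0 rY _ _ _ _).mpr (hx x'')
    · rw [if_neg h1, if_pos h2, h2]
      exact (same_copy_iff r0 rY _ _ _ _).mpr (relk_symm _ _ _ _ (hx' x''))
    · rw [if_neg h1, if_neg h2]
      exact relk_refl _ _ _
  · rw [wL_inl_inr, wL_inl_inr]
    exact relk_refl _ _ _

/-- Necessity: if two copy elements with distinct indices are identified at level
`k+1`, their `X0`-parts are `k`-trivial. -/
theorem cross_need (k : ℕ) (α α' : Y) (x x' : X0) (hne : α ≠ α')
    (h : relk (lact (wreathR r0 rY)) (k+1) (Sum.inl (α, x)) (Sum.inl (α', x'))) :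
    ∀ z, relk (lact r0) k (lact r0 x z) z := by
  intro z0
  have h2 := (relk_succ _ _ _ _).mp h (Sum.inl (α, z0))
  rw [wL_inl_inl, wL_inl_inl, if_pos rfl, if_neg (Ne.symm hne)] at h2
  exact (same_copy_iff r0 rY _ _ _ _).mp h2

theorem qx_of_mplLe (hsq : ∀ x, lact r0 x x = x) {k : ℕ} (h : mplLe (lact r0) (k+1)) :
    ∀ x z, relk (lact r0) k (lact r0 x z) z := by
  intro x z
  have h2 := (relk_succ _ _ _ _).mp (h x z) z
  rwa [hsq z] at h2

theorem mplLe_of_qx {k : ℕ} (h : ∀ x z, relk (lact r0) k (lact r0 x z) z) :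
    mplLe (lact r0) (k+1) := by
  intro a b
  rw [relk_succ]
  intro z
  exact relk_trans _ _ _ _ _ (h a z) (relk_symm _ _ _ _ (h b z))

/-- Upper bound for pairs in `Y`. -/
theorem uyy (hsqY : ∀ β, lact rY β β = β) {m : ℕ} (hm : 1 ≤ m)
    (hQ : ∀ x z, relk (lact r0) (m-1) (lact r0 x z) z) :
    ∀ (j K : ℕ) (γ δ : Y), relk (lact rY) (j+1) γ δ → j + m ≤ K →
      relk (lact (wreathR r0 rY)) K (Sum.inr γ) (Sum.inr δ) := by
  intro j
  induction j with
  | zero =>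
    intro K γ δ h1 hK
    obtain ⟨K', rfl⟩ : ∃ K', K = K'+1 := ⟨K-1, by omega⟩
    rw [relk_succ]
    intro z
    rcases z with ⟨α, x⟩ | ε
    · have he : lact rY γ α = lact rY δ α := (relk_succ _ _ _ _).mp h1 α
      rw [wL_inr_inl, wL_inr_inl, he]
      exact relk_refl _ _ _
    · have he : lact rY γ ε = lact rY δ ε := (relk_succ _ _ _ _).mp h1 ε
      rw [wL_inr_inr, wL_inr_inr, he]
      exact relk_refl _ _ _
  | succ j ih =>
    intro K γ δ h hK
    obtain ⟨K', rfl⟩ : ∃ K', K = K'+1 := ⟨K-1, by omega⟩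
    rw [relk_succ]
    intro z
    rcases z with ⟨α, x⟩ | ε
    · rw [wL_inr_inl, wL_inr_inl]
      by_cases hι : lact rY γ α = lact rY δ α
      · rw [hι]
        exact relk_refl _ _ _
      · obtain ⟨K'', rfl⟩ : ∃ K'', K' = K''+1 := ⟨K'-1, by omega⟩
        exact cross_sound r0 rY K'' _ _ x x
          (fun z => relk_of_le _ (by omega) (hQ x z))
          (fun z => relk_of_le _ (by omega) (hQ x z))
    · rw [wL_inr_inr, wL_inr_inr]
      exact ih K' _ _ ((relk_succ _ _ _ _).mp h ε) (by omega)

/-- Upper bound for pairs of copy elements. -/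
theorem uxx {m K : ℕ} (hm : 1 ≤ m)
    (hQ : ∀ x z, relk (lact r0) (m-1) (lact r0 x z) z) (hK : m ≤ K)
    (α α' : Y) (x x' : X0) :
    relk (lact (wreathR r0 rY)) K (Sum.inl (α, x)) (Sum.inl (α', x')) := by
  obtain ⟨K', rfl⟩ : ∃ K', K = K'+1 := ⟨K-1, by omega⟩
  exact cross_sound r0 rY K' α α' x x'
    (fun z => relk_of_le _ (by omega) (hQ x z))
    (fun z => relk_of_le _ (by omega) (hQ x' z))

/-- Upper bound for mixed pairs. -/
theorem uxy (hsqY : ∀ β, lact rY β β = β) {m n : ℕ} (hm : 1 ≤ m) (hn : 1 ≤ n)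
    (hQ : ∀ x z, relk (lact r0) (m-1) (lact r0 x z) z)
    (hB : mplLe (lact rY) n) (α : Y) (x : X0) (β : Y) :
    relk (lact (wreathR r0 rY)) (m+n-1) (Sum.inl (α, x)) (Sum.inr β) := by
  have hid : n = 1 → ∀ γ δ : Y, lact rY γ δ = δ := by
    intro h1 γ δ
    subst h1
    have h2 : lact rY γ δ = lact rY δ δ := (relk_succ _ _ _ _).mp (hB γ δ) δ
    rwa [hsqY δ] at h2
  have hdec : m+n-1 = (m+n-2)+1 := by omega
  rw [hdec, relk_succ]
  intro z
  rcases z with ⟨α'', x''⟩ | γ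
  · rw [wL_inl_inl, wL_inr_inl]
    by_cases hβ : lact rY β α'' = α''
    · rw [hβ]
      by_cases hα : α = α''
      · rw [if_pos hα, hα]
        exact (same_copy_iff r0 rY _ _ _ _).mpr (relk_of_le _ (by omega) (hQ x x''))
      · rw [if_neg hα]
        exact relk_refl _ _ _
    · have hn2 : 2 ≤ n := by
        by_contra h2
        exact hβ (hid (by omega) β α'')
      have hdec2 : m+n-2 = (m+n-3)+1 := by omega
      by_cases hα : α = α''
      · rw [if_pos hα, hdec2]
        exact cross_sound r0 rY _ _ _ _ _
          (fun z => relk_of_le _ (by omega) (hQ (lact r0 x x'') z))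
          (fun z => relk_of_le _ (by omega) (hQ x'' z))
      · rw [if_neg hα, hdec2]
        exact cross_sound r0 rY _ _ _ _ _
          (fun z => relk_of_le _ (by omega) (hQ x'' z))
          (fun z => relk_of_le _ (by omega) (hQ x'' z))
  · rw [wL_inl_inr, wL_inr_inr]
    by_cases hn1 : n = 1
    · rw [hid hn1 β γ]
      exact relk_refl _ _ _
    · have hn2 : 2 ≤ n := by omega
      have h1 : relk (lact rY) n γ β := hB γ β
      have h2 : relk (lact rY) (n-1) γ (lact rY β γ) := by
        have hrw : n = (n-1)+1 := by omega
        rw [hrw] at h1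
        have h3 := (relk_succ _ _ _ _).mp h1 γ
        rwa [hsqY γ] at h3
      have hrw2 : n - 1 = (n-2)+1 := by omega
      rw [hrw2] at h2
      exact uyy r0 rY hsqY hm hQ (n-2) (m+n-2) _ _ h2 (by omega)

/-- Lower bound: identification of `Y`-elements at level `K` forces collapse
of `X0` at level `K - (j+1)` whenever the `Y`-elements are not `(j+1)`-related. -/
theorem nyy : ∀ (j K : ℕ) (γ δ : Y), ¬ relk (lact rY) (j+1) γ δ →
    relk (lact (wreathR r0 rY)) K (Sum.inr γ) (Sum.inr δ) →
    mplLe (lact r0) (K - (j+1)) := by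
  intro j
  induction j with
  | zero =>
    intro K γ δ hne h
    cases K with
    | zero =>
      exfalso
      apply hne
      have h' := (relk_zero _ _ _).mp h
      injection h' with h''
      rw [h'']
      exact relk_refl _ _ _
    | succ K' =>
      have hex : ¬ ∀ ε, lact rY γ ε = lact rY δ ε := by
        intro hall
        apply hne
        rw [relk_succ]
        intro ε
        exact hall ε
      push_neg at hex
      obtain ⟨α, hα⟩ := hex
      have hpair : ∀ x : X0, relk (lact (wreathR r0 rY)) K'
          (Sum.inl (lact rY γ α, x)) (Sum.inl (lact rY δ α, x)) := by
        intro x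
        have h2 := (relk_succ _ _ _ _).mp h (Sum.inl (α, x))
        rwa [wL_inr_inl, wL_inr_inl] at h2
      have harith : K'+1 - (0+1) = K' := by omega
      rw [harith]
      cases K' with
      | zero =>
        intro a b
        exfalso
        have h3 := (relk_zero _ _ _).mp (hpair a)
        injection h3 with h4
        have h5 := congrArg Prod.fst h4
        exact hα h5
      | succ K'' =>
        apply mplLe_of_qx
        intro x z
        exact cross_need r0 rY K'' _ _ x x hα (hpair x) z
  | succ j ih =>
    intro K γ δ hne h
    cases K with
    | zero =>
      exfalso
      apply hne
      have h' := (relk_zero _ _ _).mp h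
      injection h' with h''
      rw [h'']
      exact relk_refl _ _ _
    | succ K' =>
      have hex : ¬ ∀ ε, relk (lact rY) (j+1) (lact rY γ ε) (lact rY δ ε) := by
        intro hall
        exact hne ((relk_succ _ _ _ _).mpr hall)
      push_neg at hex
      obtain ⟨ε, hε⟩ := hex
      have hrec := (relk_succ _ _ _ _).mp h (Sum.inr ε)
      rw [wL_inr_inr, wL_inr_inr] at hrec
      have hres := ih K' _ _ hε hrec
      have harith : K'+1 - (j+1+1) = K' - (j+1) := by omega
      rwa [harith]

end Wreath

/-- the wreath product of finite square-free multipermutation solutions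
of levels `m ≥ 1` and `n ≥ 1` has multipermutation level exactly `m + n - 1`. -/
theorem stmt19 {X0 Y : Type*} [Finite X0] [Finite Y] [Nonempty Y] [DecidableEq Y]
    (r0 : X0 × X0 → X0 × X0) (rY : Y × Y → Y × Y)
    (h0 : IsSquareFreeSolution r0) (hY : IsSquareFreeSolution rY)
    (m n : ℕ) (hm : 1 ≤ m) (hn : 1 ≤ n)
    (hm0 : mplEq (lact r0) m) (hnY : mplEq (lact rY) n) :
    mplEq (lact (wreathR r0 rY)) (m + n - 1) := by
  have hsq0 : ∀ x, lact r0 x x = x := fun x => by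
    unfold lact; rw [h0.sqfree]
  have hsqY : ∀ β, lact rY β β = β := fun β => by
    unfold lact; rw [hY.sqfree]
  have hQ : ∀ x z, relk (lact r0) (m-1) (lact r0 x z) z := by
    have hm' : m = (m-1)+1 := by omega
    exact qx_of_mplLe r0 hsq0 (hm' ▸ hm0.1)
  constructor
  · intro a b
    rcases a with ⟨α, x⟩ | β <;> rcases b with ⟨α', x'⟩ | β'
    · exact uxx r0 rY hm hQ (by omega) α α' x x'
    · exact uxy r0 rY hsqY hm hn hQ hnY.1 α x β'
    · exact relk_symm _ _ _ _ (uxy r0 rY hsqY hm hn hQ hnY.1 α' x' β)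
    · have h1 : relk (lact rY) ((n-1)+1) β β' := by
        have hrw : (n-1)+1 = n := by omega
        rw [hrw]
        exact hnY.1 β β'
      exact uyy r0 rY hsqY hm hQ (n-1) (m+n-1) β β' h1 (by omega)
  · intro k hk hle
    have hle' : mplLe (lact (wreathR r0 rY)) (m+n-2) :=
      mplLe_mono _ hle (by omega)
    by_cases hn1 : n = 1
    · have hno : ¬ mplLe (lact r0) (m-1) := hm0.2 (m-1) (by omega)
      apply hno
      intro x x'
      have α0 : Y := Classical.arbitrary Y
      have h2 := hle' (Sum.inl (α0, x)) (Sum.inl (α0, x'))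
      have harith : m+n-2 = m-1 := by omega
      rw [harith] at h2
      exact (same_copy_iff r0 rY _ _ _ _).mp h2
    · have hn2 : 2 ≤ n := by omega
      have hno : ¬ ∀ γ δ : Y, relk (lact rY) (n-1) γ δ := hnY.2 (n-1) (by omega)
      push_neg at hno
      obtain ⟨γ, δ, hγδ⟩ := hno
      have hγδ' : ¬ relk (lact rY) ((n-2)+1) γ δ := by
        have hrw : (n-2)+1 = n-1 := by omega
        rw [hrw]
        exact hγδ
      have hres := nyy r0 rY (n-2) (m+n-2) γ δ hγδ' (hle' _ _)
      have harith : (m+n-2) - ((n-2)+1) = m-1 := by omega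
      rw [harith] at hres
      exact hm0.2 (m-1) (by omega) hres

end YBPaper
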